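/- Let A be a finite abelian group of order a, H a torsion-free abelian group, q in [0,1], and f: A -> H a map whose zero set Z(f) = {b in A : f(b) = 0} has cardinality at most q*a. Then the problem set P(f) = {(b,c) in A x A : f(b+c) != f(b) + f(c)} has cardinality at least ((a - q*a)/2) * ((a - q*a)/2 + 1). -/

import Mathlib

open Finset

lemma key {A : Type*} [AddCommGroup A] [Fintype A] [DecidableEq A]
    {L : Type*} [AddCommGroup L] [LinearOrder L] [IsOrderedAddMonoid L] (F : A → L) :
    (univ.filter (fun b : A => 0 < F b)).card *
      ((univ.filter (fun b : A => 0 < F b)).card + 1) ≤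
      2 * (univ.filter (fun p : A × A =>
        0 < F p.1 ∧ 0 < F p.2 ∧ F (p.1 + p.2) ≠ F p.1 + F p.2)).card := by
  classical
  set T := univ.filter (fun b : A => 0 < F b) with hT
  set p := T.card with hp
  set r : A → ℕ := fun b => (T.filter (fun x => F b < F x)).card with hr
  have hmemT : ∀ b : A, b ∈ T ↔ 0 < F b := by
    intro b; simp [hT]
  -- good pairs per row are at most the rank
  have hgood : ∀ b ∈ T, (T.filter (fun c => F (b + c) = F b + F c)).card ≤ r b := by
    intro b hb
    have hbpos : 0 < F b := (hmemT b).mp hb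
    apply Finset.card_le_card_of_injOn (fun c => b + c)
    · intro c hc
      rw [Finset.mem_coe, mem_filter] at hc
      obtain ⟨hcT, heq⟩ := hc
      have hcpos : 0 < F c := (hmemT c).mp hcT
      rw [Finset.mem_coe, mem_filter, hmemT]
      refine ⟨?_, ?_⟩
      · rw [heq]; exact add_pos hbpos hcpos
      · rw [heq]; exact lt_add_of_pos_right _ hcpos
    · intro x _ y _ h
      exact add_left_cancel h
  -- rank sum bound : 2 * R + p ≤ p * p
  set R := ∑ b ∈ T, r b with hR
  have h2R : 2 * R + p ≤ p * p := by
    have hr' : ∀ b, r b = ∑ c ∈ T, (if F b < F c then 1 else 0) := by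
      intro b; rw [hr]; exact Finset.card_filter _ _
    have hswap : R = ∑ b ∈ T, ∑ c ∈ T, (if F c < F b then 1 else 0) := by
      rw [hR]
      simp only [hr']
      exact Finset.sum_comm
    have hdiag : (p : ℕ) = ∑ b ∈ T, ∑ c ∈ T, (if b = c then 1 else 0) := by
      have : ∀ b ∈ T, ∑ c ∈ T, (if b = c then 1 else 0) = 1 := by
        intro b hb
        rw [Finset.sum_ite_eq T b (fun _ => 1) ]
        simp [hb]
      rw [Finset.sum_congr rfl this]
      simp [hp]
    have key' : ∑ b ∈ T, ∑ c ∈ T,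
        ((if F b < F c then 1 else 0) + (if F c < F b then 1 else 0)
          + (if b = c then 1 else 0)) ≤ ∑ b ∈ T, ∑ c ∈ T, 1 := by
      apply Finset.sum_le_sum
      intro b _
      apply Finset.sum_le_sum
      intro c _
      by_cases h1 : F b < F c
      · have h2 : ¬ F c < F b := lt_asymm h1
        have h3 : b ≠ c := by rintro rfl; exact lt_irrefl _ h1
        simp [h1, h2, h3]
      · by_cases h2 : F c < F b
        · have h3 : b ≠ c := by rintro rfl; exact lt_irrefl _ h2
          simp [h1, h2, h3]
        · split_ifs <;> omega
    simp only [Finset.sum_add_distrib] at key'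
    rw [← hswap] at key'
    have hRR : ∑ b ∈ T, ∑ c ∈ T, (if F b < F c then 1 else 0) = R := by
      rw [hR]; simp only [hr']
    rw [hRR, ← hdiag] at key'
    simpa [two_mul, hp, mul_comm] using key'
  -- fiberwise decomposition of the problem set
  set P := univ.filter (fun x : A × A =>
      0 < F x.1 ∧ 0 < F x.2 ∧ F (x.1 + x.2) ≠ F x.1 + F x.2) with hP
  have hfib : P.card = ∑ b ∈ T, (T.filter (fun c => F (b + c) ≠ F b + F c)).card := by
    rw [Finset.card_eq_sum_card_fiberwise (f := Prod.fst) (t := T)]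
    · apply Finset.sum_congr rfl
      intro b hb
      apply Finset.card_bij (fun x _ => x.2)
      · intro x hx
        simp only [mem_filter, mem_univ, true_and, hP] at hx
        obtain ⟨⟨hx1, hx2, hx3⟩, hxb⟩ := hx
        rw [mem_filter, hmemT]
        subst hxb
        exact ⟨hx2, hx3⟩
      · intro x hx y hy hxy
        simp only [mem_filter, hP] at hx hy
        obtain ⟨-, hxb⟩ := hx
        obtain ⟨-, hyb⟩ := hy
        ext
        · rw [hxb, hyb]
        · exact hxy
      · intro c hc
        rw [mem_filter, hmemT] at hc
        refine ⟨(b, c), ?_, rfl⟩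
        simp only [mem_filter, mem_univ, true_and, hP]
        exact ⟨⟨(hmemT b).mp hb, hc.1, hc.2⟩, trivial⟩
    · intro x hx
      simp only [Finset.mem_coe, mem_filter, mem_univ, true_and, hP] at hx
      exact (hmemT x.1).mpr hx.1
  -- per-row split
  have hsplit : ∀ b ∈ T,
      (T.filter (fun c => F (b + c) ≠ F b + F c)).card
        + (T.filter (fun c => F (b + c) = F b + F c)).card = p := by
    intro b _
    rw [hp, add_comm]
    simpa using Finset.card_filter_add_card_filter_not
      (s := T) (p := fun c => F (b + c) = F b + F c)
  -- combine
  set G := ∑ b ∈ T, (T.filter (fun c => F (b + c) = F b + F c)).card with hG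
  have hGR : G ≤ R := Finset.sum_le_sum hgood
  have hNG : P.card + G = p * p := by
    rw [hfib, hG, ← Finset.sum_add_distrib]
    rw [Finset.sum_congr rfl hsplit]
    simp [hp, mul_comm]
  have : p * (p + 1) = p * p + p := by ring
  rw [this]
  linarith

lemma key2 {A : Type*} [AddCommGroup A] [Fintype A] [DecidableEq A]
    {L : Type*} [AddCommGroup L] [LinearOrder L] [IsOrderedAddMonoid L] (F : A → L) :
    (univ.filter (fun b : A => F b ≠ 0)).card *
      ((univ.filter (fun b : A => F b ≠ 0)).card + 2) ≤
      4 * (univ.filter (fun x : A × A =>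
        F (x.1 + x.2) ≠ F x.1 + F x.2)).card := by
  classical
  have hkey1 := key F
  have hkey2 := key (fun b => - F b)
  simp only [neg_pos, ← neg_add, ne_eq, neg_inj] at hkey2
  set Tp := univ.filter (fun b : A => 0 < F b) with hTp
  set Tn := univ.filter (fun b : A => F b < 0) with hTn
  set Tn' := univ.filter (fun b : A => F b ≠ 0) with hTn'
  have hn : Tn'.card = Tp.card + Tn.card := by
    have : Tn' = Tp ∪ Tn := by
      ext b
      simp only [hTp, hTn, hTn', mem_filter, mem_univ, true_and, mem_union, ne_eq]
      constructor
      · intro h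
        rcases lt_trichotomy (F b) 0 with h' | h' | h'
        · exact Or.inr h'
        · exact absurd h' h
        · exact Or.inl h'
      · rintro (h | h)
        · exact ne_of_gt h
        · exact ne_of_lt h
    rw [this]
    apply Finset.card_union_of_disjoint
    rw [Finset.disjoint_left]
    intro b hb hb'
    rw [hTp, mem_filter] at hb
    rw [hTn, mem_filter] at hb'
    exact absurd hb.2 (not_lt.mpr (le_of_lt hb'.2))
  set Np := univ.filter (fun x : A × A =>
    0 < F x.1 ∧ 0 < F x.2 ∧ F (x.1 + x.2) ≠ F x.1 + F x.2) with hNp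
  set Nn := univ.filter (fun x : A × A =>
    F x.1 < 0 ∧ F x.2 < 0 ∧ ¬ F (x.1 + x.2) = F x.1 + F x.2) with hNn
  set Pf := univ.filter (fun x : A × A => F (x.1 + x.2) ≠ F x.1 + F x.2) with hPf
  have hsub : Np.card + Nn.card ≤ Pf.card := by
    have hdisj : Disjoint Np Nn := by
      rw [Finset.disjoint_left]
      intro x hx hx'
      rw [hNp, mem_filter] at hx
      rw [hNn, mem_filter] at hx'
      exact absurd hx.2.1 (not_lt.mpr (le_of_lt hx'.2.1))
    rw [← Finset.card_union_of_disjoint hdisj]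
    apply Finset.card_le_card
    intro x hx
    rw [Finset.mem_union, hNp, hNn, mem_filter, mem_filter] at hx
    rw [hPf, mem_filter]
    exact ⟨mem_univ _, by rcases hx with ⟨-, -, -, h⟩ | ⟨-, -, -, h⟩ <;> exact h⟩
  rw [hn]
  nlinarith [hkey1, hkey2, hsub, sq_nonneg (Tp.card - Tn.card : ℤ)]

lemma key3 {A : Type*} [AddCommGroup A] [Fintype A]
    {L : Type*} [AddCommGroup L] [LinearOrder L] [IsOrderedAddMonoid L] (F : A → L) :
    Nat.card {b : A // F b ≠ 0} * (Nat.card {b : A // F b ≠ 0} + 2) ≤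
      4 * Nat.card {x : A × A // F (x.1 + x.2) ≠ F x.1 + F x.2} := by
  classical
  have h1 : Nat.card {b : A // F b ≠ 0}
      = (univ.filter (fun b : A => F b ≠ 0)).card := by
    rw [Nat.card_eq_fintype_card, Fintype.card_subtype]
  have h2 : Nat.card {x : A × A // F (x.1 + x.2) ≠ F x.1 + F x.2}
      = (univ.filter (fun x : A × A => F (x.1 + x.2) ≠ F x.1 + F x.2)).card := by
    rw [Nat.card_eq_fintype_card, Fintype.card_subtype]
  rw [h1, h2]
  exact key2 F

theorem almost_hom_almost_zero {A H : Type*} [AddCommGroup A] [Fintype A]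
    [AddCommGroup H]
    (htf : ∀ (m : ℤ) (h : H), m ≠ 0 → m • h = 0 → h = 0)
    (a : ℕ) (ha : Fintype.card A = a)
    (q : ℚ) (hq0 : 0 ≤ q) (hq1 : q ≤ 1)
    (f : A → H)
    (hZ : (Nat.card {b : A // f b = 0} : ℚ) ≤ q * a) :
    ((a - q * a) / 2) * ((a - q * a) / 2 + 1) ≤
      (Nat.card {p : A × A // f (p.1 + p.2) ≠ f p.1 + f p.2} : ℚ) := by
  classical
  haveI : NoZeroSMulDivisors ℤ H := by
    constructor
    intro m x h
    rcases eq_or_ne m 0 with hm | hm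
    · exact Or.inl hm
    · exact Or.inr (htf m x hm h)
  set M := Submodule.span ℤ (Set.range f) with hM
  haveI : Module.Finite ℤ M := Module.Finite.span_of_finite ℤ (Set.finite_range f)
  haveI : Module.Free ℤ M := Module.free_of_finite_type_torsion_free'
  set ι := Module.Free.ChooseBasisIndex ℤ M with hι
  set k := Fintype.card ι with hk
  set E : M ≃ₗ[ℤ] (Fin k → ℤ) :=
    ((Module.Free.chooseBasis ℤ M).repr.trans
        (Finsupp.domLCongr (Fintype.equivFin ι))).trans
      (Finsupp.linearEquivFunOnFinite ℤ ℤ (Fin k)) with hE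
  letI : LinearOrder (Lex (Fin k → ℤ)) := inferInstance
  set F : A → Lex (Fin k → ℤ) :=
    fun x => toLex (E ⟨f x, Submodule.subset_span (Set.mem_range_self x)⟩) with hF
  have hF0 : ∀ b : A, F b = 0 ↔ f b = 0 := by
    intro b
    rw [hF]
    constructor
    · intro h
      have h2 : E ⟨f b, _⟩ = 0 := h
      have h3 := (map_eq_zero_iff E E.injective).mp h2
      exact congrArg Subtype.val h3
    · intro h
      have h2 : (⟨f b, Submodule.subset_span (Set.mem_range_self b)⟩ : M) = 0 :=
        Subtype.ext h
      show toLex (E ⟨f b, Submodule.subset_span (Set.mem_range_self b)⟩) = 0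
      rw [h2, map_zero]
      rfl
  have hFadd : ∀ b c : A, (F (b + c) = F b + F c) ↔ (f (b + c) = f b + f c) := by
    intro b c
    rw [hF]
    have hadd : (toLex (E ⟨f b, Submodule.subset_span (Set.mem_range_self b)⟩)
        + toLex (E ⟨f c, Submodule.subset_span (Set.mem_range_self c)⟩))
        = toLex (E (⟨f b, Submodule.subset_span (Set.mem_range_self b)⟩
            + ⟨f c, Submodule.subset_span (Set.mem_range_self c)⟩)) := by
      rw [map_add]
      rfl
    rw [hadd]
    constructor
    · intro h
      have h2 := E.injective (toLex.injective h)
      exact congrArg Subtype.val h2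
    · intro h
      have : (⟨f (b + c), Submodule.subset_span (Set.mem_range_self (b + c))⟩ : M)
          = ⟨f b, Submodule.subset_span (Set.mem_range_self b)⟩
            + ⟨f c, Submodule.subset_span (Set.mem_range_self c)⟩ :=
        Subtype.ext h
      show toLex (E ⟨f (b + c), Submodule.subset_span (Set.mem_range_self (b + c))⟩) = _
      rw [this]
  -- apply the key lemma to F
  have hkey := key3 F
  have hne : Nat.card {b : A // F b ≠ 0} = Nat.card {b : A // f b ≠ 0} :=
    Nat.card_congr (Equiv.subtypeEquivRight (fun b => not_congr (hF0 b)))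
  have hprob : Nat.card {x : A × A // F (x.1 + x.2) ≠ F x.1 + F x.2}
      = Nat.card {p : A × A // f (p.1 + p.2) ≠ f p.1 + f p.2} :=
    Nat.card_congr (Equiv.subtypeEquivRight (fun x => not_congr (hFadd x.1 x.2)))
  rw [hne, hprob] at hkey
  set n := Nat.card {b : A // f b ≠ 0} with hn
  set N := Nat.card {p : A × A // f (p.1 + p.2) ≠ f p.1 + f p.2} with hN
  set z := Nat.card {b : A // f b = 0} with hz
  have hzn : z + n = a := by
    rw [hz, hn, Nat.card_eq_fintype_card, Nat.card_eq_fintype_card,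
      Fintype.card_subtype, Fintype.card_subtype, ← ha, ← Finset.card_univ]
    exact Finset.card_filter_add_card_filter_not (fun b => f b = 0)
  -- final arithmetic over ℚ
  have hkeyq : (n : ℚ) * (n + 2) ≤ 4 * N := by exact_mod_cast hkey
  have hznq : (z : ℚ) + n = a := by exact_mod_cast hzn
  have hx0 : 0 ≤ (a : ℚ) - q * a := by nlinarith [Nat.cast_nonneg (α := ℚ) a]
  have hxn : (a : ℚ) - q * a ≤ n := by linarith
  nlinarith [mul_nonneg (sub_nonneg.mpr hxn)
    (by positivity : (0:ℚ) ≤ (n : ℚ) + ((a : ℚ) - q * a) + 2)]
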